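/- Let P be a finite graded EL-shellable poset. Then every closed interval [a,b] of P is shellable. -/

import Mathlib

variable {α : Type*}

/-- The closed interval of the subposet `S` (for the order relation `le`)
between `a` and `b`. -/
def orderInterval (le : α → α → Prop) (S : Set α) (a b : α) : Set α :=
  {z | z ∈ S ∧ le a z ∧ le z b}
/-- A finset is a chain of the subposet `S` for the order relation `le`. -/
def IsChainFinsetIn (le : α → α → Prop) (S : Set α) (C : Finset α) : Prop :=
  (↑C : Set α) ⊆ S ∧ ∀ u ∈ C, ∀ v ∈ C, u ≠ v → (le u v ∨ le v u)

/-- A maximal chain of the subposet `S`: a chain of `S` which is not properly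
contained in any other chain of `S`. -/
def IsMaxChainFinsetIn (le : α → α → Prop) (S : Set α) (C : Finset α) : Prop :=
  IsChainFinsetIn le S C ∧
    ∀ C' : Finset α, IsChainFinsetIn le S C' → C ⊆ C' → C' = C

/-- The subposet `S` is graded: in every closed interval all maximal chains
have the same length (cardinality). -/
def IsGradedIn (le : α → α → Prop) (S : Set α) : Prop :=
  ∀ a ∈ S, ∀ b ∈ S, le a b → ∀ C₁ C₂ : Finset α,
    IsMaxChainFinsetIn le (orderInterval le S a b) C₁ →
    IsMaxChainFinsetIn le (orderInterval le S a b) C₂ → C₁.card = C₂.card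

/-- `r` is a shelling order on the maximal chains of the subposet `S`: a strict
linear order on maximal chains such that whenever `m₁ < m₂`, there exist a maximal
chain `m₃ < m₂` and an element `x ∈ m₂` with `m₁ ∩ m₂ ⊆ m₃ ∩ m₂ = m₂ \ {x}`. -/
def IsShellingOrder [DecidableEq α] (le : α → α → Prop) (S : Set α)
    (r : Finset α → Finset α → Prop) : Prop :=
  (∀ C, IsMaxChainFinsetIn le S C → ¬r C C) ∧
  (∀ C₁ C₂ C₃, IsMaxChainFinsetIn le S C₁ → IsMaxChainFinsetIn le S C₂ →
    IsMaxChainFinsetIn le S C₃ → r C₁ C₂ → r C₂ C₃ → r C₁ C₃) ∧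
  (∀ C₁ C₂, IsMaxChainFinsetIn le S C₁ → IsMaxChainFinsetIn le S C₂ → C₁ ≠ C₂ →
    r C₁ C₂ ∨ r C₂ C₁) ∧
  (∀ m₁ m₂, IsMaxChainFinsetIn le S m₁ → IsMaxChainFinsetIn le S m₂ → r m₁ m₂ →
    ∃ m₃, IsMaxChainFinsetIn le S m₃ ∧ r m₃ m₂ ∧
      ∃ x ∈ m₂, m₁ ∩ m₂ ⊆ m₃ ∩ m₂ ∧ m₃ ∩ m₂ = m₂.erase x)

/-- The subposet `S` is shellable. -/
def IsShellableIn [DecidableEq α] (le : α → α → Prop) (S : Set α) : Prop :=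
  ∃ r : Finset α → Finset α → Prop, IsShellingOrder le S r
/-- The covering relation within the subposet `S`. -/
def CovRelIn (le : α → α → Prop) (S : Set α) (u v : α) : Prop :=
  u ∈ S ∧ v ∈ S ∧ le u v ∧ u ≠ v ∧ ∀ w ∈ S, le u w → le w v → w = u ∨ w = v

/-- `L` is a maximal chain of the closed interval of the subposet `S` between `a`
and `b`, listed in increasing order: consecutive entries are covers in the
interval, the list starts at `a` and ends at `b`. -/
def IsMaxChainListIn (le : α → α → Prop) (S : Set α) (a b : α) (L : List α) : Prop :=
  (∀ z ∈ L, z ∈ orderInterval le S a b) ∧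
    L.Chain' (CovRelIn le (orderInterval le S a b)) ∧
    L.head? = some a ∧ L.getLast? = some b

/-- The label sequence of a chain, listed in increasing order. -/
def labelSeq {Λ : Type*} (f : α → α → Λ) (L : List α) : List Λ :=
  (L.zip L.tail).map fun p => f p.1 p.2

/-- `f` is an EL-labeling of the subposet `S`: in every closed interval there is a
unique maximal chain with weakly increasing label sequence, and its label
sequence is lexicographically smaller than that of every other maximal chain of
the interval. -/
def IsELShellingIn {Λ : Type*} [LinearOrder Λ] (le : α → α → Prop) (S : Set α)
    (f : α → α → Λ) : Prop :=
  ∀ a ∈ S, ∀ b ∈ S, le a b →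
    ∃ L₀ : List α, IsMaxChainListIn le S a b L₀ ∧ (labelSeq f L₀).Chain' (· ≤ ·) ∧
      (∀ L : List α, IsMaxChainListIn le S a b L →
        (labelSeq f L).Chain' (· ≤ ·) → L = L₀) ∧
      (∀ L : List α, IsMaxChainListIn le S a b L → L ≠ L₀ →
        List.Lex (· < ·) (labelSeq f L₀) (labelSeq f L))

/-- The subposet `S` is EL-shellable. -/
def IsELShellableIn (le : α → α → Prop) (S : Set α) : Prop :=
  ∃ (Λ : Type) (_ : LinearOrder Λ) (f : α → α → Λ), IsELShellingIn le S f


set_option linter.unusedSectionVars false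

namespace ELAux

section PO
variable [PartialOrder α]

/-- The pure covering relation. -/
def PCov (u v : α) : Prop := u < v ∧ ∀ w, u ≤ w → w ≤ v → w = u ∨ w = v

lemma orderInterval_univ (c d : α) : orderInterval (· ≤ ·) Set.univ c d = Set.Icc c d := by
  ext z; simp [orderInterval, Set.mem_Icc]

lemma orderInterval_Icc {a b c d : α} (hc : a ≤ c) (hd : d ≤ b) :
    orderInterval (· ≤ ·) (Set.Icc a b) c d = Set.Icc c d := by
  ext z
  constructor
  · rintro ⟨_, h1, h2⟩; exact ⟨h1, h2⟩
  · rintro ⟨h1, h2⟩; exact ⟨⟨hc.trans h1, h2.trans hd⟩, h1, h2⟩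

lemma covRelIn_Icc_iff {c d u v : α} :
    CovRelIn (· ≤ ·) (Set.Icc c d) u v ↔ u ∈ Set.Icc c d ∧ v ∈ Set.Icc c d ∧ PCov u v := by
  constructor
  · rintro ⟨hu, hv, hle, hne, hcov⟩
    exact ⟨hu, hv, lt_of_le_of_ne hle hne,
      fun w h1 h2 => hcov w ⟨hu.1.trans h1, h2.trans hv.2⟩ h1 h2⟩
  · rintro ⟨hu, hv, hlt, hcov⟩
    exact ⟨hu, hv, hlt.le, hlt.ne, fun w _ h1 h2 => hcov w h1 h2⟩

/-- maximal chain lists from `c` to `d` in the whole poset -/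
def MC (c d : α) (L : List α) : Prop := IsMaxChainListIn (· ≤ ·) Set.univ c d L

lemma chain'_lt {L : List α} (h : L.Chain' PCov) : L.Chain' (· < ·) :=
  h.imp fun _ _ hab => hab.1

lemma pairwise_lt {L : List α} (h : L.Chain' PCov) : L.Pairwise (· < ·) :=
  List.isChain_iff_pairwise.mp (chain'_lt h)

lemma nodup_of_chain' {L : List α} (h : L.Chain' PCov) : L.Nodup :=
  (pairwise_lt h).imp ne_of_lt

lemma head_le_mem {L : List α} (h : L.Pairwise (· < ·)) {c : α} (hc : L.head? = some c)
    {z : α} (hz : z ∈ L) : c ≤ z := by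
  cases L with
  | nil => simp at hz
  | cons u T =>
    simp only [List.head?_cons, Option.some.injEq] at hc
    subst hc
    rcases List.mem_cons.mp hz with rfl | hz
    · exact le_rfl
    · exact ((List.pairwise_cons.mp h).1 z hz).le

lemma mem_le_last {L : List α} (h : L.Pairwise (· < ·)) {d : α} (hd : L.getLast? = some d)
    {z : α} (hz : z ∈ L) : z ≤ d := by
  induction L with
  | nil => simp at hz
  | cons u T ih =>
    cases T with
    | nil =>
      simp only [List.getLast?_singleton, Option.some.injEq] at hd
      simp only [List.mem_singleton] at hz
      subst hd; subst hz; exact le_rfl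
    | cons v T' =>
      rw [List.getLast?_cons_cons] at hd
      rcases List.mem_cons.mp hz with rfl | hz
      · have hdmem : d ∈ v :: T' := (List.mem_getLast?_eq_getLast hd).2 ▸ List.getLast_mem _
        exact ((List.pairwise_cons.mp h).1 d hdmem).le
      · exact ih (List.pairwise_cons.mp h).2 hd hz

lemma chain'_and_mem {R : α → α → Prop} {p : α → Prop} :
    ∀ {L : List α}, L.Chain' R → (∀ z ∈ L, p z) →
      L.Chain' (fun u v => p u ∧ p v ∧ R u v) := by
  intro L
  induction L with
  | nil => intro _ _; exact List.isChain_nil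
  | cons a T ih =>
    intro hch hp
    simp only [List.Chain'] at hch ⊢
    rw [List.isChain_cons] at hch ⊢
    refine ⟨fun y hy => ⟨hp a (by simp), hp y (List.mem_cons_of_mem _ (List.mem_of_mem_head? hy)),
      hch.1 y hy⟩, ih hch.2 fun z hz => hp z (List.mem_cons_of_mem _ hz)⟩

lemma mc_iff {c d : α} {L : List α} :
    MC c d L ↔ L ≠ [] ∧ L.head? = some c ∧ L.getLast? = some d ∧ L.Chain' PCov := by
  unfold MC IsMaxChainListIn
  rw [orderInterval_univ]
  constructor
  · rintro ⟨hmem, hch, hh, hl⟩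
    refine ⟨?_, hh, hl, hch.imp fun _ _ huv => (covRelIn_Icc_iff.mp huv).2.2⟩
    rintro rfl; simp at hh
  · rintro ⟨hne, hh, hl, hch⟩
    have hp := pairwise_lt hch
    have hmem : ∀ z ∈ L, z ∈ Set.Icc c d :=
      fun z hz => ⟨head_le_mem hp hh hz, mem_le_last hp hl hz⟩
    refine ⟨hmem, ?_, hh, hl⟩
    have := chain'_and_mem (p := fun z => z ∈ Set.Icc c d) hch hmem
    exact this.imp fun _ _ h => covRelIn_Icc_iff.mpr ⟨h.1, h.2.1, h.2.2⟩

lemma mc_ne_nil {c d : α} {L : List α} (h : MC c d L) : L ≠ [] := (mc_iff.mp h).1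
lemma mc_head {c d : α} {L : List α} (h : MC c d L) : L.head? = some c := (mc_iff.mp h).2.1
lemma mc_last {c d : α} {L : List α} (h : MC c d L) : L.getLast? = some d := (mc_iff.mp h).2.2.1
lemma mc_chain' {c d : α} {L : List α} (h : MC c d L) : L.Chain' PCov := (mc_iff.mp h).2.2.2
lemma mc_pairwise {c d : α} {L : List α} (h : MC c d L) : L.Pairwise (· < ·) :=
  pairwise_lt (mc_chain' h)
lemma mc_nodup {c d : α} {L : List α} (h : MC c d L) : L.Nodup := nodup_of_chain' (mc_chain' h)
lemma mc_mem {c d : α} {L : List α} (h : MC c d L) {z : α} (hz : z ∈ L) : z ∈ Set.Icc c d :=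
  ⟨head_le_mem (mc_pairwise h) (mc_head h) hz, mem_le_last (mc_pairwise h) (mc_last h) hz⟩
lemma mc_le {c d : α} {L : List α} (h : MC c d L) : c ≤ d := by
  have hc : c ∈ L := by
    have := mc_head h
    cases L with
    | nil => simp at this
    | cons u T => simp only [List.head?_cons, Option.some.injEq] at this; subst this; simp
  exact (mc_mem h hc).2

lemma mc_single (c : α) : MC c c [c] := by
  rw [mc_iff]
  refine ⟨by simp, by simp, by simp, by simp [List.Chain']⟩

lemma mc_self {c : α} {L : List α} (h : MC c c L) : L = [c] := by
  obtain ⟨T, hT⟩ : ∃ T, L = c :: T := by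
    have hh := mc_head h
    cases L with
    | nil => simp at hh
    | cons u T => simp only [List.head?_cons, Option.some.injEq] at hh; subst hh; exact ⟨T, rfl⟩
  subst hT
  cases T with
  | nil => rfl
  | cons y T' =>
    have hy : y ∈ Set.Icc c c := mc_mem h (by simp)
    have : y = c := le_antisymm hy.2 hy.1
    have hlt : c < y := (List.pairwise_cons.mp (mc_pairwise h)).1 y (by simp)
    exact absurd this hlt.ne'

lemma mc_tail {c d z : α} {T : List α} (h : MC c d (c :: T)) (hz : T.head? = some z) :
    MC z d T := by
  rw [mc_iff] at h ⊢
  obtain ⟨T', hT'⟩ : ∃ T', T = z :: T' := by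
    cases T with
    | nil => simp at hz
    | cons y T' => simp only [List.head?_cons, Option.some.injEq] at hz; subst hz; exact ⟨T', rfl⟩
  subst hT'
  exact ⟨by simp, by simp, by rw [← List.getLast?_cons_cons (l := T') (a := c)]; exact h.2.2.1,
    (List.isChain_cons_cons.mp h.2.2.2).2⟩

end PO
end ELAux


namespace ELAux
section PO
variable {α : Type*} [PartialOrder α]

lemma mem_of_comparable {L : List α} (hch : L.Chain' PCov) {w : α}
    (hcomp : ∀ z ∈ L, w ≤ z ∨ z ≤ w) :
    ∀ {c d : α}, L.head? = some c → L.getLast? = some d → c ≤ w → w ≤ d → w ∈ L := by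
  induction L with
  | nil => intro c d hh _ _ _; simp at hh
  | cons u T ih =>
    intro c d hh hl hcw hwd
    simp only [List.head?_cons, Option.some.injEq] at hh
    subst hh
    cases T with
    | nil =>
      simp only [List.getLast?_singleton, Option.some.injEq] at hl
      subst hl
      have : w = u := le_antisymm hwd hcw
      simp [this]
    | cons v T' =>
      have hpc : PCov u v := (List.isChain_cons_cons.mp hch).1
      by_cases hvw : v ≤ w
      · have : w ∈ v :: T' := by
          refine ih (List.isChain_cons_cons.mp hch).2
            (fun z hz => hcomp z (List.mem_cons_of_mem _ hz)) rfl ?_ hvw hwd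
          rw [← List.getLast?_cons_cons (l := T') (a := u)]; exact hl
        exact List.mem_cons_of_mem _ this
      · have hwv : w ≤ v := by
          rcases hcomp v (by simp) with h | h
          · exact h
          · exact absurd h hvw
        rcases hpc.2 w hcw hwv with rfl | rfl
        · simp
        · simp

lemma mcFinset_of_list [DecidableEq α] {c d : α} {L : List α} (h : MC c d L) :
    IsMaxChainFinsetIn (· ≤ ·) (Set.Icc c d) L.toFinset := by
  have hp := mc_pairwise h
  have hcomp : ∀ u ∈ L, ∀ v ∈ L, u ≠ v → (u ≤ v ∨ v ≤ u) := by
    have hsym : Symmetric (fun u v : α => u ≤ v ∨ v ≤ u) := fun u v h => h.symm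
    haveI : Std.Symm (fun u v : α => u ≤ v ∨ v ≤ u) := ⟨fun u v h => hsym h⟩
    have := (hp.imp (fun hlt => Or.inl hlt.le) : L.Pairwise (fun u v : α => u ≤ v ∨ v ≤ u)).forall
    intro u hu v hv huv
    exact this hu hv huv
  constructor
  · constructor
    · intro z hz
      exact mc_mem h (List.mem_toFinset.mp hz)
    · intro u hu v hv huv
      exact hcomp u (List.mem_toFinset.mp hu) v (List.mem_toFinset.mp hv) huv
  · intro C' hC' hsub
    apply Finset.Subset.antisymm _ hsub
    intro w hw
    rw [List.mem_toFinset]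
    refine mem_of_comparable (mc_chain' h) ?_ (mc_head h) (mc_last h)
      (hC'.1 hw).1 (hC'.1 hw).2
    intro z hz
    by_cases hwz : w = z
    · exact Or.inl hwz.le
    · exact hC'.2 w hw z (hsub (List.mem_toFinset.mpr hz)) hwz

lemma insert_endpoint_chain [DecidableEq α] {c d e : α} (he : e ∈ Set.Icc c d)
    (hcomp : ∀ x ∈ Set.Icc c d, e ≤ x ∨ x ≤ e) {C : Finset α}
    (hC : IsChainFinsetIn (· ≤ ·) (Set.Icc c d) C) :
    IsChainFinsetIn (· ≤ ·) (Set.Icc c d) (insert e C) := by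
  constructor
  · intro z hz
    rcases Finset.mem_insert.mp hz with rfl | hz
    · exact he
    · exact hC.1 hz
  · intro u hu v hv huv
    rcases Finset.mem_insert.mp hu with rfl | hu'
    · exact hcomp v (hC.1 ((Finset.mem_insert.mp hv).resolve_left (Ne.symm huv)))
    · rcases Finset.mem_insert.mp hv with rfl | hv'
      · exact (hcomp u (hC.1 hu')).symm
      · exact hC.2 u hu' v hv' huv

lemma left_mem_mcFinset [DecidableEq α] {c d : α} (hcd : c ≤ d) {C : Finset α}
    (hC : IsMaxChainFinsetIn (· ≤ ·) (Set.Icc c d) C) : c ∈ C := by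
  have h := hC.2 (insert c C)
    (insert_endpoint_chain ⟨le_rfl, hcd⟩ (fun x hx => Or.inl hx.1) hC.1)
    (Finset.subset_insert _ _)
  rw [← h]; exact Finset.mem_insert_self _ _

lemma right_mem_mcFinset [DecidableEq α] {c d : α} (hcd : c ≤ d) {C : Finset α}
    (hC : IsMaxChainFinsetIn (· ≤ ·) (Set.Icc c d) C) : d ∈ C := by
  have h := hC.2 (insert d C)
    (insert_endpoint_chain ⟨hcd, le_rfl⟩ (fun x hx => Or.inr hx.2) hC.1)
    (Finset.subset_insert _ _)
  rw [← h]; exact Finset.mem_insert_self _ _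

lemma list_of_mcFinset [DecidableEq α] {d : α} :
    ∀ (n : ℕ) (c : α) (C : Finset α), C.card ≤ n → c ≤ d →
      IsMaxChainFinsetIn (· ≤ ·) (Set.Icc c d) C → ∃ L, MC c d L ∧ L.toFinset = C := by
  intro n
  induction n with
  | zero =>
    intro c C hcard hcd hC
    exact absurd (Finset.card_eq_zero.mp (Nat.le_zero.mp hcard) ▸ left_mem_mcFinset hcd hC)
      (Finset.notMem_empty c)
  | succ n ih =>
    intro c C hcard hcd hC
    have hc : c ∈ C := left_mem_mcFinset hcd hC
    by_cases hCc : C.erase c = ∅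
    · have hCeq : C = {c} := by
        rcases (Finset.erase_eq_empty_iff _ _).mp hCc with h | h
        · exact absurd (h ▸ hc) (Finset.notMem_empty c)
        · exact h
      have hd : d ∈ C := right_mem_mcFinset hcd hC
      rw [hCeq] at hd
      have hdc : d = c := Finset.mem_singleton.mp hd
      subst hdc
      exact ⟨[d], mc_single d, by simp [hCeq]⟩
    · obtain ⟨c₀, hc₀, hmin⟩ : ∃ m ∈ C.erase c, ∀ x ∈ C.erase c, ¬ x < m := by
        obtain ⟨m, hm⟩ := Finset.exists_minimal (Finset.nonempty_iff_ne_empty.mpr hCc)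
        exact ⟨m, hm.prop, fun x hx => hm.not_lt hx⟩
      have hc₀C : c₀ ∈ C := Finset.mem_of_mem_erase hc₀
      have hminle : ∀ x ∈ C.erase c, c₀ ≤ x := by
        intro x hx
        by_cases hxc : x = c₀
        · exact hxc.ge
        · rcases hC.1.2 c₀ hc₀C x (Finset.mem_of_mem_erase hx) (Ne.symm hxc) with h | h
          · exact h
          · exact absurd (lt_of_le_of_ne h hxc) (hmin x hx)
      have hcc₀ : c < c₀ :=
        lt_of_le_of_ne (hC.1.1 hc₀C).1 (Ne.symm (Finset.ne_of_mem_erase hc₀))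
      have hc₀d : c₀ ≤ d := (hC.1.1 hc₀C).2
      have herase : IsMaxChainFinsetIn (· ≤ ·) (Set.Icc c₀ d) (C.erase c) := by
        constructor
        · constructor
          · intro z hz
            exact ⟨hminle z hz, (hC.1.1 (Finset.mem_of_mem_erase hz)).2⟩
          · intro u hu v hv huv
            exact hC.1.2 u (Finset.mem_of_mem_erase hu) v (Finset.mem_of_mem_erase hv) huv
        · intro C'' hC'' hsub
          have h1 : IsChainFinsetIn (· ≤ ·) (Set.Icc c d) (insert c C'') := by
            constructor
            · intro z hz
              rcases Finset.mem_insert.mp hz with rfl | hz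
              · exact ⟨le_rfl, hcd⟩
              · exact ⟨hcc₀.le.trans (hC''.1 hz).1, (hC''.1 hz).2⟩
            · intro u hu v hv huv
              rcases Finset.mem_insert.mp hu with rfl | hu'
              · refine Or.inl (hcc₀.le.trans
                  (hC''.1 ((Finset.mem_insert.mp hv).resolve_left (Ne.symm huv))).1)
              · rcases Finset.mem_insert.mp hv with rfl | hv'
                · exact Or.inr (hcc₀.le.trans (hC''.1 hu').1)
                · exact hC''.2 u hu' v hv' huv
          have h2 : C ⊆ insert c C'' := by
            intro x hx
            by_cases hxc : x = c
            · exact hxc ▸ Finset.mem_insert_self _ _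
            · exact Finset.mem_insert_of_mem (hsub (Finset.mem_erase.mpr ⟨hxc, hx⟩))
          have h3 : insert c C'' = C := hC.2 _ h1 h2
          have hcnot : c ∉ C'' := by
            intro hcC''
            exact absurd ((hC''.1 hcC'').1.trans_lt hcc₀) (lt_irrefl c₀)
          rw [← h3, Finset.erase_insert hcnot]
      have hcard' : (C.erase c).card ≤ n := by
        rw [Finset.card_erase_of_mem hc]
        omega
      obtain ⟨L', hL', hLF⟩ := ih c₀ (C.erase c) hcard' hc₀d herase
      have hpcov : PCov c c₀ := by
        refine ⟨hcc₀, fun w hcw hwc₀ => ?_⟩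
        by_contra hcon
        push_neg at hcon
        have hcompw : ∀ x ∈ C, w ≤ x ∨ x ≤ w := by
          intro x hx
          by_cases hxc : x = c
          · exact Or.inr (hxc ▸ hcw)
          · exact Or.inl (hwc₀.trans (hminle x (Finset.mem_erase.mpr ⟨hxc, hx⟩)))
        have hwchain : IsChainFinsetIn (· ≤ ·) (Set.Icc c d) (insert w C) := by
          constructor
          · intro z hz
            rcases Finset.mem_insert.mp hz with rfl | hz
            · exact ⟨hcw, hwc₀.trans hc₀d⟩
            · exact hC.1.1 hz
          · intro u hu v hv huv
            rcases Finset.mem_insert.mp hu with rfl | hu'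
            · exact hcompw v ((Finset.mem_insert.mp hv).resolve_left (Ne.symm huv))
            · rcases Finset.mem_insert.mp hv with rfl | hv'
              · exact (hcompw u hu').symm
              · exact hC.1.2 u hu' v hv' huv
        have hweq : insert w C = C := hC.2 _ hwchain (Finset.subset_insert _ _)
        have hwC : w ∈ C := by rw [← hweq]; exact Finset.mem_insert_self _ _
        by_cases hwc : w = c
        · exact hcon.1 hwc
        · exact hcon.2 (le_antisymm hwc₀ (hminle w (Finset.mem_erase.mpr ⟨hwc, hwC⟩)))
      refine ⟨c :: L', ?_, ?_⟩
      · rw [mc_iff]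
        refine ⟨by simp, by simp, ?_, ?_⟩
        · obtain ⟨y, T, hT⟩ := List.exists_cons_of_ne_nil (mc_ne_nil hL')
          rw [hT, List.getLast?_cons_cons, ← hT]
          exact mc_last hL'
        · simp only [List.Chain']
          rw [List.isChain_cons]
          refine ⟨fun y hy => ?_, mc_chain' hL'⟩
          have : y = c₀ := by
            have := mc_head hL'
            rw [this] at hy
            exact (Option.mem_some_iff.mp hy).symm
          rw [this]
          exact hpcov
      · simp only [List.toFinset_cons, hLF]
        exact Finset.insert_erase hc
  
end PO
end ELAux

namespace ELAux
section PO
variable {α : Type*} [PartialOrder α]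

lemma mc_unique [DecidableEq α] {c d : α} {L₁ L₂ : List α} (h₁ : MC c d L₁) (h₂ : MC c d L₂)
    (h : L₁.toFinset = L₂.toFinset) : L₁ = L₂ := by
  haveI : IsAntisymm α (· < ·) := ⟨fun a b h h' => absurd h' (asymm h)⟩
  exact List.Perm.eq_of_pairwise (fun _ _ _ _ h h' => absurd h' (asymm h))
    (mc_pairwise h₁) (mc_pairwise h₂)
    (List.perm_of_nodup_nodup_toFinset_eq (mc_nodup h₁) (mc_nodup h₂) h)

end PO

section LabelSeq
variable {α Λ : Type*}

lemma labelSeq_cons_cons (f : α → α → Λ) (x y : α) (T : List α) :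
    labelSeq f (x :: y :: T) = f x y :: labelSeq f (y :: T) := rfl

@[simp] lemma labelSeq_nil (f : α → α → Λ) : labelSeq f ([] : List α) = [] := rfl
@[simp] lemma labelSeq_single (f : α → α → Λ) (x : α) : labelSeq f [x] = [] := rfl

lemma labelSeq_length (f : α → α → Λ) (L : List α) :
    (labelSeq f L).length = L.length - 1 := by
  simp [labelSeq]

lemma labelSeq_append (f : α → α → Λ) :
    ∀ (A : List α) (x : α) (B : List α),
      labelSeq f (A ++ x :: B) = labelSeq f (A ++ [x]) ++ labelSeq f (x :: B) := by
  intro A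
  induction A with
  | nil => intro x B; simp
  | cons a A ih =>
    intro x B
    cases A with
    | nil => simp [labelSeq_cons_cons]
    | cons a' A' =>
      have h1 : (a :: a' :: A') ++ x :: B = a :: a' :: (A' ++ x :: B) := rfl
      have h2 : (a :: a' :: A') ++ [x] = a :: a' :: (A' ++ [x]) := rfl
      rw [h1, h2, labelSeq_cons_cons]
      have h3 : a' :: (A' ++ x :: B) = (a' :: A') ++ x :: B := rfl
      have h4 : a' :: (A' ++ [x]) = (a' :: A') ++ [x] := rfl
      rw [h3, h4, ih x B]
      cases A' with
      | nil => simp [labelSeq_cons_cons]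
      | cons a'' A'' =>
        have h5 : (a' :: a'' :: A'') ++ [x] = a' :: a'' :: (A'' ++ [x]) := rfl
        have h6 : (a' :: a'' :: A'') ++ x :: B = a' :: a'' :: (A'' ++ x :: B) := rfl
        rw [h5, labelSeq_cons_cons, labelSeq_cons_cons]
        simp [labelSeq_cons_cons]

lemma head?_append_pair (P : List α) (u : α) (l l' : List α) :
    (P ++ u :: l).head? = (P ++ u :: l').head? := by
  cases P <;> simp

lemma lex_trans' {r : Λ → Λ → Prop} (htr : Transitive r) :
    ∀ {a b c : List Λ}, List.Lex r a b → List.Lex r b c → List.Lex r a c := by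
  intro a b c hab
  induction hab generalizing c with
  | nil =>
    intro hbc
    cases hbc with
    | cons _ => exact List.Lex.nil
    | rel _ => exact List.Lex.nil
  | cons h ih =>
    intro hbc
    cases hbc with
    | cons h₂ => exact List.Lex.cons (ih h₂)
    | rel h₂ => exact List.Lex.rel h₂
  | rel h =>
    intro hbc
    cases hbc with
    | cons h₂ => exact List.Lex.rel h
    | rel h₂ => exact List.Lex.rel (htr h h₂)

lemma lex_irrefl' {r : Λ → Λ → Prop} (hirr : ∀ x, ¬ r x x) : ∀ l : List Λ, ¬ List.Lex r l l := by
  intro l h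
  induction l with
  | nil => cases h
  | cons a l ih =>
    cases h with
    | cons h' => exact ih h'
    | rel h' => exact hirr a h'

lemma lex_total [LinearOrder Λ] :
    ∀ l₁ l₂ : List Λ, List.Lex (· < ·) l₁ l₂ ∨ l₁ = l₂ ∨ List.Lex (· < ·) l₂ l₁ :=
  fun l₁ l₂ => trichotomous_of (List.Lex (· < ·)) l₁ l₂

lemma lex_append_of_lex_of_len {r : Λ → Λ → Prop} :
    ∀ {A B : List Λ}, List.Lex r A B → A.length = B.length →
      ∀ s t, List.Lex r (A ++ s) (B ++ t) := by
  intro A B h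
  induction h with
  | nil => intro hlen; simp at hlen
  | cons h ih =>
    intro hlen s t
    exact List.Lex.cons (ih (by simpa using hlen) s t)
  | rel h => intro _ s t; exact List.Lex.rel h

lemma labels_first_descent [LinearOrder Λ] {l : List Λ} (h : ¬ l.Chain' (· ≤ ·)) :
    ∃ p x y s, l = p ++ x :: y :: s ∧ ¬ x ≤ y ∧ (p ++ [x]).Chain' (· ≤ ·) := by
  induction l with
  | nil => exact absurd List.isChain_nil h
  | cons a t ih =>
    by_cases h0 : ∀ y ∈ t.head?, a ≤ y
    · have ht : ¬ t.Chain' (· ≤ ·) := fun hc => h (List.isChain_cons.mpr ⟨h0, hc⟩)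
      obtain ⟨p, x, y, s, hdec, hxy, hinc⟩ := ih ht
      refine ⟨a :: p, x, y, s, by rw [List.cons_append, hdec], hxy, ?_⟩
      simp only [List.Chain']
      rw [List.cons_append, List.isChain_cons]
      refine ⟨?_, hinc⟩
      intro z hz
      have hhead : (p ++ [x]).head? = t.head? := by
        rw [hdec]
        exact head?_append_pair p x [] (y :: s)
      rw [hhead] at hz
      exact h0 z hz
    · push_neg at h0
      obtain ⟨b, hb, hab⟩ := h0
      obtain ⟨t', ht'⟩ : ∃ t', t = b :: t' := by
        cases t with
        | nil => simp at hb
        | cons u T =>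
          have hbu : u = b := by simpa using hb
          exact ⟨T, by rw [hbu]⟩
      exact ⟨[], a, b, t', by simp [ht'], not_le.mpr hab, by simp [List.Chain']⟩

end LabelSeq
end ELAux

namespace ELAux
section LabelSeq
variable {α Λ : Type*}

lemma labelSeq_decomp {f : α → α → Λ} :
    ∀ {p : List Λ} {M : List α} {x : Λ} {s : List Λ}, labelSeq f M = p ++ x :: s →
      ∃ P u v S, M = P ++ u :: v :: S ∧ labelSeq f (P ++ [u]) = p ∧ f u v = x ∧
        labelSeq f (v :: S) = s := by
  intro p
  induction p with
  | nil =>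
    intro M x s h
    match M with
    | [] => simp at h
    | [u] => simp at h
    | u :: v :: S =>
      rw [labelSeq_cons_cons] at h
      simp only [List.nil_append, List.cons.injEq] at h
      exact ⟨[], u, v, S, rfl, by simp, h.1, h.2⟩
  | cons a p ih =>
    intro M x s h
    match M with
    | [] => simp at h
    | [u] => simp at h
    | m₁ :: m₂ :: M' =>
      rw [labelSeq_cons_cons] at h
      simp only [List.cons_append, List.cons.injEq] at h
      obtain ⟨P', u, v, S, hdec, hp, hx, hs⟩ := ih h.2
      refine ⟨m₁ :: P', u, v, S, by rw [List.cons_append, ← hdec], ?_, hx, hs⟩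
      have hne : P' ++ [u] ≠ [] := by simp
      obtain ⟨w, R, hR⟩ := List.exists_cons_of_ne_nil hne
      have hw : w = m₂ := by
        have h1 : (P' ++ [u]).head? = (P' ++ u :: v :: S).head? := head?_append_pair P' u [] (v :: S)
        rw [hR, ← hdec] at h1
        simpa using h1
      calc labelSeq f ((m₁ :: P') ++ [u]) = labelSeq f (m₁ :: w :: R) := by rw [List.cons_append, hR]
        _ = f m₁ w :: labelSeq f (w :: R) := labelSeq_cons_cons f m₁ w R
        _ = a :: p := by rw [← hR, hw, h.1, hp]

end LabelSeq
end ELAux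

namespace ELAux
section Key
variable {α Λ : Type*} [PartialOrder α] [LinearOrder Λ] [DecidableEq α]

lemma key {f : α → α → Λ}
    (hgr : ∀ u v : α, u ≤ v → ∀ L L' : List α, MC u v L → MC u v L' → L.length = L'.length)
    (hel : ∀ u v : α, u ≤ v → ∃ L₀, MC u v L₀ ∧ (labelSeq f L₀).Chain' (· ≤ ·) ∧
      (∀ L, MC u v L → (labelSeq f L).Chain' (· ≤ ·) → L = L₀) ∧
      (∀ L, MC u v L → L ≠ L₀ → List.Lex (· < ·) (labelSeq f L₀) (labelSeq f L))) (d : α) :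
    ∀ (L₂ L₁ : List α) (c : α), MC c d L₁ → MC c d L₂ → L₁ ≠ L₂ →
      ¬ List.Lex (· < ·) (labelSeq f L₂) (labelSeq f L₁) →
      ∃ P u x v S, L₂ = P ++ u :: x :: v :: S ∧ ¬ f u x ≤ f x v ∧ x ∉ L₁ := by
  intro L₂
  induction L₂ with
  | nil => intro L₁ c _ h2 _ _; exact absurd rfl (mc_ne_nil h2)
  | cons hd T₂ ih =>
    intro L₁ c hmc₁ hmc₂ hne hnlex
    have hhd : hd = c := by have := mc_head hmc₂; simpa using this
    subst hhd
    obtain ⟨T₁, rfl⟩ : ∃ T₁, L₁ = hd :: T₁ := by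
      have hh := mc_head hmc₁
      cases L₁ with
      | nil => simp at hh
      | cons u T =>
        simp only [List.head?_cons, Option.some.injEq] at hh
        exact ⟨T, by rw [hh]⟩
    cases T₁ with
    | nil =>
      have hdc : hd = d := by have := mc_last hmc₁; simpa using this
      subst hdc
      exact absurd (mc_self hmc₂).symm hne
    | cons y₁ T₁' =>
    cases T₂ with
    | nil =>
      have hdc : hd = d := by have := mc_last hmc₂; simpa using this
      subst hdc
      exact absurd (mc_self hmc₁) hne
    | cons y₂ T₂' =>
    have ht₂ : MC y₂ d (y₂ :: T₂') := mc_tail hmc₂ rfl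
    have ht₁ : MC y₁ d (y₁ :: T₁') := mc_tail hmc₁ rfl
    by_cases hy : y₁ = y₂
    · subst hy
      have htne : (y₁ :: T₁') ≠ (y₁ :: T₂') := by
        intro he; exact hne (by rw [he])
      have hnlex' : ¬ List.Lex (· < ·) (labelSeq f (y₁ :: T₂')) (labelSeq f (y₁ :: T₁')) := by
        intro hl
        apply hnlex
        rw [labelSeq_cons_cons, labelSeq_cons_cons]
        exact List.Lex.cons hl
      obtain ⟨P, u, x, v, S, hdec, hlab, hx⟩ := ih (y₁ :: T₁') y₁ ht₁ ht₂ htne hnlex'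
      refine ⟨hd :: P, u, x, v, S, by rw [List.cons_append, ← hdec], hlab, ?_⟩
      intro hmem
      rcases List.mem_cons.mp hmem with rfl | hmem2
      · have hxT : x ∈ (y₁ :: T₂') := by rw [hdec]; simp
        exact absurd ((List.pairwise_cons.mp (mc_pairwise hmc₂)).1 x hxT) (lt_irrefl _)
      · exact hx hmem2
    · -- divergence case
      have hcd := mc_le hmc₂
      obtain ⟨L₀, hL₀, hinc₀, huniq, hlex⟩ := hel hd d hcd
      have hA : ¬ (labelSeq f (hd :: y₂ :: T₂')).Chain' (· ≤ ·) := by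
        intro hch
        have he2 : (hd :: y₂ :: T₂') = L₀ := huniq _ hmc₂ hch
        have hne1 : (hd :: y₁ :: T₁') ≠ L₀ := by rw [← he2]; exact hne
        have := hlex _ hmc₁ hne1
        rw [← he2] at this
        exact hnlex this
      obtain ⟨p, xx, yy, s, hlabdec, hdesc, hpfx⟩ := labels_first_descent hA
      obtain ⟨P, u, x, S', hMdec, hlabP, hfux, hlabrest⟩ := labelSeq_decomp hlabdec
      obtain ⟨v, S, rfl⟩ : ∃ v S, S' = v :: S := by
        cases S' with
        | nil => simp at hlabrest
        | cons v S => exact ⟨v, S, rfl⟩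
      rw [labelSeq_cons_cons] at hlabrest
      simp only [List.cons.injEq] at hlabrest
      have hfxv : f x v = yy := hlabrest.1
      refine ⟨P, u, x, v, S, hMdec, by rw [hfux, hfxv]; exact hdesc, ?_⟩
      intro hxL₁
      have hZpre : (P ++ [u, x]) ++ (v :: S) = (hd :: y₂ :: T₂') := by
        rw [hMdec]; simp
      have hZne : (P ++ [u, x]) ≠ [] := by simp
      have hZmc : MC hd x (P ++ [u, x]) := by
        rw [mc_iff]
        refine ⟨hZne, ?_, ?_, ?_⟩
        · have h1 : ((P ++ [u, x]) ++ (v :: S)).head? = (P ++ [u, x]).head? :=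
            List.head?_append_of_ne_nil _ hZne
          rw [hZpre] at h1
          rw [← h1]; rfl
        · rw [show P ++ [u, x] = (P ++ [u]) ++ [x] by simp]
          exact List.getLast?_concat
        · exact (mc_chain' hmc₂).prefix ⟨v :: S, hZpre⟩
      have hZinc : (labelSeq f (P ++ [u, x])).Chain' (· ≤ ·) := by
        have hlz : labelSeq f (P ++ [u, x]) = p ++ [xx] := by
          rw [show P ++ [u, x] = P ++ u :: [x] from rfl, labelSeq_append, hlabP]
          simp [labelSeq_cons_cons, hfux]
        rw [hlz]; exact hpfx
      obtain ⟨A, B, hW⟩ := List.append_of_mem hxL₁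
      have hWpre : (A ++ [x]) ++ B = (hd :: y₁ :: T₁') := by rw [hW]; simp
      have hWne : (A ++ [x]) ≠ [] := by simp
      have hWmc : MC hd x (A ++ [x]) := by
        rw [mc_iff]
        refine ⟨hWne, ?_, ?_, ?_⟩
        · have h1 : ((A ++ [x]) ++ B).head? = (A ++ [x]).head? :=
            List.head?_append_of_ne_nil _ hWne
          rw [hWpre] at h1
          rw [← h1]; rfl
        · exact List.getLast?_concat
        · exact (mc_chain' hmc₁).prefix ⟨B, hWpre⟩
      have hcx : hd ≤ x := mc_le hZmc
      obtain ⟨Z₀, hZ₀mc, hZ₀inc, hZuniq, hZlex⟩ := hel hd x hcx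
      have hZeq : (P ++ [u, x]) = Z₀ := hZuniq _ hZmc hZinc
      have hZW : (P ++ [u, x]) ≠ (A ++ [x]) := by
        intro he
        have e2 : hd :: y₂ :: T₂' = (P ++ [u, x]) ++ (v :: S) := hZpre.symm
        have e1 : hd :: y₁ :: T₁' = (P ++ [u, x]) ++ B := by rw [← hWpre, he]
        obtain ⟨h0, Zt, hZt⟩ : ∃ h0 Zt, P ++ [u, x] = h0 :: Zt := by
          cases P with
          | nil => exact ⟨u, [x], rfl⟩
          | cons a P' => exact ⟨a, P' ++ [u, x], rfl⟩
        have hZtne : Zt ≠ [] := by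
          intro h
          have hl2 : (P ++ [u, x]).length = P.length + 2 := by simp
          rw [hZt, h] at hl2
          simp at hl2
        obtain ⟨z₀, Zr, hZr⟩ := List.exists_cons_of_ne_nil hZtne
        rw [hZt, hZr] at e1 e2
        simp only [List.cons_append, List.cons.injEq] at e1 e2
        exact hy (e1.2.1.trans e2.2.1.symm)
      have hWZ₀ : (A ++ [x]) ≠ Z₀ := fun h => hZW (hZeq.trans h.symm)
      have hlexZW : List.Lex (· < ·) (labelSeq f (P ++ [u, x])) (labelSeq f (A ++ [x])) := by
        rw [hZeq]; exact hZlex _ hWmc hWZ₀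
      have hlen : (labelSeq f (P ++ [u, x])).length = (labelSeq f (A ++ [x])).length := by
        rw [labelSeq_length, labelSeq_length, hgr hd x hcx _ _ hZmc hWmc]
      have h2 : labelSeq f (hd :: y₂ :: T₂') =
          labelSeq f (P ++ [u, x]) ++ labelSeq f (x :: v :: S) := by
        rw [← hZpre, show (P ++ [u, x]) ++ v :: S = (P ++ [u]) ++ x :: (v :: S) by simp,
          labelSeq_append, show (P ++ [u]) ++ [x] = P ++ [u, x] by simp]
      have h1 : labelSeq f (hd :: y₁ :: T₁') =
          labelSeq f (A ++ [x]) ++ labelSeq f (x :: B) := by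
        rw [hW, labelSeq_append]
      exact hnlex (by rw [h1, h2]; exact lex_append_of_lex_of_len hlexZW hlen _ _)

end Key
end ELAux

namespace ELAux
lemma lex_pair_extend {Λ : Type*} {r : Λ → Λ → Prop} {p q p' q' : Λ}
    (h : List.Lex r [p, q] [p', q']) (t : List Λ) :
    List.Lex r (p :: q :: t) (p' :: q' :: t) := by
  cases h with
  | rel h => exact List.Lex.rel h
  | cons h' =>
    cases h' with
    | rel h => exact List.Lex.cons (List.Lex.rel h)
    | cons h'' => cases h''
end ELAux

/-- Let `P` be a finite graded EL-shellable poset.  Then every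
closed interval `[a,b]` of `P` is shellable. -/

theorem el_shellable_closed_intervals_shellable
    [PartialOrder α] [Fintype α] [DecidableEq α]
    (hgraded : IsGradedIn (· ≤ · : α → α → Prop) Set.univ)
    (hEL : IsELShellableIn (· ≤ · : α → α → Prop) Set.univ)
    (a b : α) (hab : a ≤ b) :
    IsShellableIn (· ≤ · : α → α → Prop) (Set.Icc a b) := by
  classical
  obtain ⟨Λ, iΛ, f, hf⟩ := hEL
  have hel : ∀ u v : α, u ≤ v → ∃ L₀, ELAux.MC u v L₀ ∧
      (labelSeq f L₀).Chain' (· ≤ ·) ∧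
      (∀ L, ELAux.MC u v L → (labelSeq f L).Chain' (· ≤ ·) → L = L₀) ∧
      (∀ L, ELAux.MC u v L → L ≠ L₀ →
        List.Lex (· < ·) (labelSeq f L₀) (labelSeq f L)) :=
    fun u v huv => hf u trivial v trivial huv
  have hgr : ∀ u v : α, u ≤ v → ∀ L L' : List α, ELAux.MC u v L → ELAux.MC u v L' →
      L.length = L'.length := by
    intro u v huv L L' hL hL'
    have h1 := ELAux.mcFinset_of_list hL
    have h2 := ELAux.mcFinset_of_list hL'
    have h3 := hgraded u (Set.mem_univ u) v (Set.mem_univ v) huv L.toFinset L'.toFinset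
      (by rw [ELAux.orderInterval_univ]; exact h1)
      (by rw [ELAux.orderInterval_univ]; exact h2)
    rwa [List.toFinset_card_of_nodup (ELAux.mc_nodup hL),
      List.toFinset_card_of_nodup (ELAux.mc_nodup hL')] at h3
  have hex : ∀ C : Finset α, IsMaxChainFinsetIn (· ≤ ·) (Set.Icc a b) C →
      ∃ L, ELAux.MC a b L ∧ L.toFinset = C :=
    fun C hC => ELAux.list_of_mcFinset C.card a C le_rfl hab hC
  have htrans : Transitive ((· < ·) : Λ → Λ → Prop) := fun _ _ _ h h' => h.trans h'
  have hirr : ∀ x : Λ, ¬ x < x := fun x => lt_irrefl x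
  refine ⟨fun C D => ∃ L L', ELAux.MC a b L ∧ L.toFinset = C ∧ ELAux.MC a b L' ∧
    L'.toFinset = D ∧ (List.Lex (· < ·) (labelSeq f L) (labelSeq f L') ∨
      (labelSeq f L = labelSeq f L' ∧ WellOrderingRel C D)), ?_, ?_, ?_, ?_⟩
  · -- irreflexivity
    rintro C hC ⟨L, L', h1, h2, h3, h4, h5⟩
    have hLL : L = L' := ELAux.mc_unique h1 h3 (h2.trans h4.symm)
    rcases h5 with h5 | ⟨_, h5⟩
    · rw [hLL] at h5; exact ELAux.lex_irrefl' hirr _ h5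
    · exact (irrefl_of WellOrderingRel C) h5
  · -- transitivity
    rintro C₁ C₂ C₃ _ _ _ ⟨L, L', h1, h2, h3, h4, h5⟩ ⟨M, M', g1, g2, g3, g4, g5⟩
    have hLM : L' = M := ELAux.mc_unique h3 g1 (h4.trans g2.symm)
    subst hLM
    refine ⟨L, M', h1, h2, g3, g4, ?_⟩
    rcases h5 with h5 | ⟨he, hw⟩ <;> rcases g5 with g5 | ⟨ge, gw⟩
    · exact Or.inl (ELAux.lex_trans' htrans h5 g5)
    · exact Or.inl (ge ▸ h5)
    · exact Or.inl (by rw [he]; exact g5)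
    · exact Or.inr ⟨he.trans ge, trans_of WellOrderingRel hw gw⟩
  · -- totality
    intro C₁ C₂ h1 h2 hne
    obtain ⟨L, hL, hLF⟩ := hex C₁ h1
    obtain ⟨L', hL', hLF'⟩ := hex C₂ h2
    rcases ELAux.lex_total (labelSeq f L) (labelSeq f L') with h | h | h
    · exact Or.inl ⟨L, L', hL, hLF, hL', hLF', Or.inl h⟩
    · rcases trichotomous_of WellOrderingRel C₁ C₂ with hw | heq | hw
      · exact Or.inl ⟨L, L', hL, hLF, hL', hLF', Or.inr ⟨h, hw⟩⟩
      · exact absurd heq hne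
      · exact Or.inr ⟨L', L, hL', hLF', hL, hLF, Or.inr ⟨h.symm, hw⟩⟩
    · exact Or.inr ⟨L', L, hL', hLF', hL, hLF, Or.inl h⟩
  · -- shelling condition
    rintro m₁ m₂ hm₁ hm₂ ⟨L₁, L₂, h1, h2, h3, h4, h5⟩
    have hne : L₁ ≠ L₂ := by
      rintro rfl
      rcases h5 with h5 | ⟨_, h5⟩
      · exact ELAux.lex_irrefl' hirr _ h5
      · have hmm : m₁ = m₂ := h2.symm.trans h4
        rw [hmm] at h5
        exact (irrefl_of WellOrderingRel m₂) h5
    have hnlex : ¬ List.Lex (· < ·) (labelSeq f L₂) (labelSeq f L₁) := by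
      intro hl
      rcases h5 with h5 | ⟨he, _⟩
      · exact ELAux.lex_irrefl' hirr _ (ELAux.lex_trans' htrans h5 hl)
      · rw [he] at hl; exact ELAux.lex_irrefl' hirr _ hl
    obtain ⟨P, u, x, v, S, hdec, hdesc, hxL₁⟩ :=
      ELAux.key hgr hel b L₂ L₁ a h1 h3 hne hnlex
    have hch₂ : L₂.Chain' ELAux.PCov := ELAux.mc_chain' h3
    have hsplit : (P ++ [u]) ++ (x :: v :: S) = L₂ := by rw [hdec]; simp
    simp only [List.Chain'] at hch₂
    rw [← hsplit, List.isChain_append] at hch₂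
    obtain ⟨hcP, hcX, hbr⟩ := hch₂
    have hux : ELAux.PCov u x := hbr u (by simp [List.getLast?_concat]) x rfl
    have hxv : ELAux.PCov x v := (List.isChain_cons_cons.mp hcX).1
    have hvS : (v :: S).Chain' ELAux.PCov := (List.isChain_cons_cons.mp hcX).2
    have huv : u ≤ v := hux.1.le.trans hxv.1.le
    obtain ⟨L₀, hL₀, hinc₀, huniq₀, hlex₀⟩ := hel u v huv
    have hmxv : ELAux.MC u v [u, x, v] := by
      rw [ELAux.mc_iff]
      exact ⟨by simp, by simp, by simp,
        List.isChain_cons_cons.mpr ⟨hux, List.isChain_pair.mpr hxv⟩⟩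
    have hne₀ : [u, x, v] ≠ L₀ := by
      intro he
      rw [← he] at hinc₀
      have : f u x ≤ f x v := List.isChain_pair.mp hinc₀
      exact hdesc this
    have hlex₃ : List.Lex (· < ·) (labelSeq f L₀) (labelSeq f [u, x, v]) :=
      hlex₀ _ hmxv hne₀
    have hlen₀ : L₀.length = 3 := by
      have := hgr u v huv L₀ [u, x, v] hL₀ hmxv; simpa using this
    obtain ⟨z, rfl⟩ : ∃ z, L₀ = [u, z, v] := by
      have hh := ELAux.mc_head hL₀
      have hl := ELAux.mc_last hL₀
      rcases L₀ with _ | ⟨e1, _ | ⟨e2, _ | ⟨e3, _ | ⟨e4, L₅⟩⟩⟩⟩ <;> simp at hlen₀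
      have he1 : e1 = u := by simpa using hh
      have he3 : e3 = v := by simpa using hl
      exact ⟨e2, by rw [he1, he3]⟩
    have hcz := ELAux.mc_chain' hL₀
    have huz : ELAux.PCov u z := (List.isChain_cons_cons.mp hcz).1
    have hzv : ELAux.PCov z v := List.isChain_pair.mp (List.isChain_cons_cons.mp hcz).2
    have hzx : z ≠ x := by
      intro he
      exact hne₀ (by rw [he])
    have hmc₃ : ELAux.MC a b (P ++ u :: z :: v :: S) := by
      rw [ELAux.mc_iff]
      refine ⟨by simp, ?_, ?_, ?_⟩
      · have hh := ELAux.mc_head h3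
        rw [hdec] at hh
        rw [ELAux.head?_append_pair P u (z :: v :: S) (x :: v :: S)]
        exact hh
      · have hl := ELAux.mc_last h3
        rw [hdec] at hl
        rw [List.getLast?_append_cons] at hl ⊢
        rw [List.getLast?_cons_cons, List.getLast?_cons_cons] at hl ⊢
        exact hl
      · simp only [List.Chain']
        rw [show P ++ u :: z :: v :: S = (P ++ [u]) ++ (z :: v :: S) by simp,
          List.isChain_append]
        refine ⟨hcP, List.isChain_cons_cons.mpr ⟨hzv, hvS⟩, ?_⟩
        intro a' ha' b' hb'
        have ha'' : u = a' := by simpa [List.getLast?_concat] using ha'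
        have hb'' : z = b' := by simpa using hb'
        rw [← ha'', ← hb'']
        exact huz
    have hpair₂ := ELAux.mc_pairwise h3
    rw [hdec, List.pairwise_append] at hpair₂
    obtain ⟨pP, pX, hcross⟩ := hpair₂
    have pX1 := List.pairwise_cons.mp pX
    have pX2 := List.pairwise_cons.mp pX1.2
    have hxnot₃ : x ∉ (P ++ u :: z :: v :: S) := by
      intro hmem
      simp only [List.mem_append, List.mem_cons] at hmem
      rcases hmem with hP | he | he | he | hS
      · exact absurd (hcross x hP x (by simp)) (lt_irrefl x)
      · exact absurd (he ▸ hux.1) (lt_irrefl x)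
      · exact hzx he.symm
      · exact absurd (he ▸ hxv.1) (lt_irrefl x)
      · exact absurd (pX2.1 x (List.mem_cons_of_mem _ hS)) (lt_irrefl x)
    have hinter : (P ++ u :: z :: v :: S).toFinset ∩ m₂ = m₂.erase x := by
      apply Finset.ext
      intro y
      constructor
      · intro hy
        obtain ⟨hy3, hy2⟩ := Finset.mem_inter.mp hy
        refine Finset.mem_erase.mpr ⟨?_, hy2⟩
        intro he
        rw [he] at hy3
        exact hxnot₃ (List.mem_toFinset.mp hy3)
      · intro hy
        obtain ⟨hyx, hy2⟩ := Finset.mem_erase.mp hy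
        refine Finset.mem_inter.mpr ⟨?_, hy2⟩
        have hyL₂ : y ∈ L₂ := by
          rw [← h4] at hy2
          exact List.mem_toFinset.mp hy2
        rw [hdec] at hyL₂
        simp only [List.mem_append, List.mem_cons] at hyL₂
        apply List.mem_toFinset.mpr
        simp only [List.mem_append, List.mem_cons]
        rcases hyL₂ with h | h | h | h | h
        · exact Or.inl h
        · exact Or.inr (Or.inl h)
        · exact absurd h hyx
        · exact Or.inr (Or.inr (Or.inr (Or.inl h)))
        · exact Or.inr (Or.inr (Or.inr (Or.inr h)))
    refine ⟨(P ++ u :: z :: v :: S).toFinset, ELAux.mcFinset_of_list hmc₃, ?_, x, ?_, ?_, hinter⟩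
    · -- r m₃ m₂
      refine ⟨_, L₂, hmc₃, rfl, h3, h4, Or.inl ?_⟩
      have e3 : labelSeq f (P ++ u :: z :: v :: S) =
          labelSeq f (P ++ [u]) ++ labelSeq f (u :: z :: v :: S) :=
        ELAux.labelSeq_append f P u (z :: v :: S)
      have e2 : labelSeq f L₂ = labelSeq f (P ++ [u]) ++ labelSeq f (u :: x :: v :: S) := by
        rw [hdec]; exact ELAux.labelSeq_append f P u (x :: v :: S)
      rw [e3, e2]
      apply List.Lex.append_left
      show List.Lex (· < ·) (f u z :: f z v :: labelSeq f (v :: S))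
        (f u x :: f x v :: labelSeq f (v :: S))
      have hlex₃' : List.Lex (· < ·) [f u z, f z v] [f u x, f x v] := hlex₃
      exact ELAux.lex_pair_extend hlex₃' _
    · -- x ∈ m₂
      rw [← h4]
      exact List.mem_toFinset.mpr (by rw [hdec]; simp)
    · -- m₁ ∩ m₂ ⊆ m₃ ∩ m₂
      rw [hinter]
      intro y hy
      obtain ⟨hy1, hy2⟩ := Finset.mem_inter.mp hy
      refine Finset.mem_erase.mpr ⟨?_, hy2⟩
      intro he
      rw [he, ← h2] at hy1
      exact hxL₁ (List.mem_toFinset.mp hy1)
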